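/- For every i ∈ {2,…,k}, the quotients q_i = (N − r_i)/(d·m_i) and q_1 = (N − r_1)/(d·m_1) satisfy q_i·m_i = q_1·m_1 − [(r̄_i − r̄_1)/d], where [x] denotes the integer nearest to x (the hypotheses guarantee no ties occur); in particular m_i divides q_1·m_1 − [(r̄_i − r̄_1)/d] and q_i is exactly computable from q_1 and the corrupted remainders. -/

import Mathlib

/-- For every `i ≠ 0`, the quotients `q i = (N - r i) / (d * m i)` and
`q₁ = (N - r 0) / (d * m 0)` satisfy `q i * m i = q₁ * m 0 - round((r̄ i - r̄ 0) / d)`;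
in particular `m i` divides `q₁ * m 0 - round((r̄ i - r̄ 0) / d)` and `q i` is computable
from `q₁` and the corrupted remainders. -/
theorem other_quotients_from_first_quotient
    (k : ℕ) (hk : 0 < k) (d : ℤ) (hd : 0 < d)
    (m : Fin k → ℤ) (hm : ∀ i, 0 < m i)
    (hcop : ∀ i j, i ≠ j → IsCoprime (m i) (m j))
    (M : ℤ) (hM : M = ∏ i, m i)
    (r : Fin k → ℤ) (hr : ∀ i, 0 ≤ r i ∧ r i < d * m i)
    (hcong : ∀ i j, d ∣ r i - r j)
    (N : ℤ) (hNrange : 0 ≤ N ∧ N < d * M)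
    (hN : ∀ i, N ≡ r i [ZMOD d * m i])
    (Δr : Fin k → ℤ) (hΔ : ∀ i, 4 * |Δr i| < d)
    (rb : Fin k → ℤ) (hrb : ∀ i, rb i = r i + Δr i)
    (q : Fin k → ℤ) (hq : ∀ i, q i = (N - r i) / (d * m i)) :
    ∀ i : Fin k, i ≠ ⟨0, hk⟩ →
      q i * m i = q ⟨0, hk⟩ * m ⟨0, hk⟩ -
          round (((rb i - rb ⟨0, hk⟩ : ℤ) : ℚ) / (d : ℚ)) ∧
      m i ∣ q ⟨0, hk⟩ * m ⟨0, hk⟩ -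
          round (((rb i - rb ⟨0, hk⟩ : ℤ) : ℚ) / (d : ℚ)) ∧
      q i = (q ⟨0, hk⟩ * m ⟨0, hk⟩ -
          round (((rb i - rb ⟨0, hk⟩ : ℤ) : ℚ) / (d : ℚ))) / m i := by
  intro i hi
  set i0 : Fin k := ⟨0, hk⟩
  -- exactness of the quotients
  have hexact : ∀ j : Fin k, q j * (d * m j) = N - r j := by
    intro j
    have hdvd : d * m j ∣ N - r j := by
      simpa [neg_sub] using (dvd_neg.mpr (hN j).dvd)
    rw [hq j]
    exact Int.ediv_mul_cancel hdvd
  -- t is the exact integer difference divided by d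
  obtain ⟨t, ht⟩ := hcong i i0
  have hdne : (d : ℚ) ≠ 0 := Int.cast_ne_zero.mpr hd.ne'
  -- compute the round
  have hround : round (((rb i - rb i0 : ℤ) : ℚ) / (d : ℚ)) = t := by
    have he : rb i - rb i0 = d * t + (Δr i - Δr i0) := by
      rw [hrb i, hrb i0]; linarith [ht]
    have habs : 2 * |Δr i - Δr i0| < d := by
      have h1 := hΔ i; have h2 := hΔ i0
      have := abs_sub (Δr i) (Δr i0)
      linarith
    have hx : ((rb i - rb i0 : ℤ) : ℚ) / (d : ℚ)
        = ((Δr i - Δr i0 : ℤ) : ℚ) / (d : ℚ) + (t : ℚ) := by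
      rw [he]; push_cast; field_simp; ring
    rw [hx, round_add_intCast]
    have h0 : round (((Δr i - Δr i0 : ℤ) : ℚ) / (d : ℚ)) = 0 := by
      rw [round_eq_zero_iff]
      have hdpos : (0 : ℚ) < (d : ℚ) := by exact_mod_cast hd
      have habsq : |((Δr i - Δr i0 : ℤ) : ℚ)| < (d : ℚ) / 2 := by
        rw [← Int.cast_abs]
        rw [lt_div_iff₀ (by norm_num : (0:ℚ) < 2)]
        exact_mod_cast (by linarith : |Δr i - Δr i0| * 2 < d)
      have : |((Δr i - Δr i0 : ℤ) : ℚ) / (d : ℚ)| < 1 / 2 := by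
        rw [abs_div, abs_of_pos hdpos, div_lt_iff₀ hdpos]
        calc |((Δr i - Δr i0 : ℤ) : ℚ)| < (d : ℚ) / 2 := habsq
          _ = 1 / 2 * (d : ℚ) := by ring
      constructor
      · linarith [neg_abs_le (((Δr i - Δr i0 : ℤ) : ℚ) / (d : ℚ)), this]
      · linarith [le_abs_self (((Δr i - Δr i0 : ℤ) : ℚ) / (d : ℚ))]
    rw [h0, zero_add]
  -- main identity
  have hmain : q i * m i = q i0 * m i0 - t := by
    have h1 := hexact i
    have h2 := hexact i0
    have : d * (q i0 * m i0 - q i * m i) = d * t := by linarith [ht]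
    have := mul_left_cancel₀ hd.ne' this
    linarith
  refine ⟨by rw [hround]; exact hmain, ?_, ?_⟩
  · rw [hround, ← hmain]; exact dvd_mul_left (m i) (q i)
  · rw [hround, ← hmain]
    exact (Int.mul_ediv_cancel _ (hm i).ne').symm
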